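/- Let m ≥ a ≥ 2 be integers. Every partially ordered set P on m elements contains either an a-degenerate subset of size at least max{a, a^{1/4}·√m/3}, or an (ℓ,α)-ladder of size at least max{a, a^{1/4}·√m/3} (i.e., with ℓ·max{α,1} ≥ max{a, a^{1/4}·√m/3}). -/

import Mathlib

open Finset

/-- A subset `S` of a poset is *`a`-degenerate* if no element of `S` is strictly
greater than `a` other elements of `S`. -/
def ADegenerate {P : Type*} [Preorder P] (a : ℕ) (S : Finset P) : Prop :=
  ∀ x ∈ S, ¬ ∃ T ⊆ S, T.card = a ∧ ∀ y ∈ T, y < x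

/-- A poset contains an `(l, α)`-ladder: a chain `X 0 < X 1 < ⋯ < X (l-1)` together
with `l` antichains `Y 0, …, Y (l-1)`, each of size `α`, such that every `y ∈ Y i`
satisfies `y ≤ X i`, and no `y ∈ Y (i+1)` satisfies `y ≤ X i`. -/
def HasLadder (P : Type*) [Preorder P] (l α : ℕ) : Prop :=
  ∃ (X : ℕ → P) (Y : ℕ → Finset P),
    (∀ i j, i < j → j < l → X i < X j) ∧
    (∀ i, i < l → (Y i).card = α) ∧
    (∀ i, i < l → IsAntichain (· ≤ ·) (↑(Y i) : Set P)) ∧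
    (∀ i, i < l → ∀ y ∈ Y i, y ≤ X i) ∧
    (∀ i, i + 1 < l → ∀ y ∈ Y (i + 1), ¬ y ≤ X i)

namespace DegLadderAux

open scoped Classical

variable {P : Type*} [PartialOrder P] [Fintype P]

/-- height of `x` over the ground set `R` : `1 +` max height of elements of `R`
strictly below `x`. -/
noncomputable def ht (R : Finset P) : P → ℕ :=
  (IsWellFounded.wf (α := P) (r := (· < ·))).fix fun x rec =>
    ((R.filter (fun y => y < x)).attach.sup fun y => rec y.1 (Finset.mem_filter.mp y.2).2) + 1

theorem ht_eq (R : Finset P) (x : P) :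
    ht R x = ((R.filter (fun y => y < x)).attach.sup fun y => ht R y.1) + 1 := by
  unfold ht
  rw [WellFounded.fix_eq]

theorem ht_pos (R : Finset P) (x : P) : 1 ≤ ht R x := by
  rw [ht_eq]; omega

theorem ht_lt (R : Finset P) {x y : P} (hy : y ∈ R) (hxy : y < x) :
    ht R y < ht R x := by
  conv_rhs => rw [ht_eq]
  have hm : y ∈ R.filter (fun y => y < x) := Finset.mem_filter.mpr ⟨hy, hxy⟩
  have h2 : ht R y ≤ (R.filter (fun y => y < x)).attach.sup
      (fun z => ht R z.1) := by
    exact Finset.le_sup (f := fun z => ht R z.1) (Finset.mem_attach _ ⟨y, hm⟩)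
  omega

theorem ht_mono {R₁ R₂ : Finset P} (h : R₁ ⊆ R₂) (x : P) : ht R₁ x ≤ ht R₂ x := by
  induction x using WellFoundedLT.induction with
  | _ x ih =>
    rw [ht_eq, ht_eq]
    have hs : ∀ y ∈ (R₁.filter (fun y => y < x)).attach,
        ht R₁ y.1 ≤ (R₂.filter (fun y => y < x)).attach.sup (fun z => ht R₂ z.1) := by
      intro y _
      have hy := Finset.mem_filter.mp y.2
      have h1 : ht R₁ y.1 ≤ ht R₂ y.1 := ih y.1 hy.2
      have hy2 : y.1 ∈ R₂.filter (fun y => y < x) := Finset.mem_filter.mpr ⟨h hy.1, hy.2⟩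
      have h2 : ht R₂ y.1 ≤ (R₂.filter (fun y => y < x)).attach.sup
          (fun z => ht R₂ z.1) := by
        exact Finset.le_sup (f := fun z => ht R₂ z.1) (Finset.mem_attach _ ⟨y.1, hy2⟩)
      exact h1.trans h2
    have := Finset.sup_le hs
    omega

theorem ht_exists {R : Finset P} {x : P} {n : ℕ} (hn : 1 ≤ n) (h : n + 1 ≤ ht R x) :
    ∃ y ∈ R, y < x ∧ n ≤ ht R y := by
  rw [ht_eq] at h
  have hsup : n ≤ (R.filter (fun y => y < x)).attach.sup fun y => ht R y.1 := by omega
  have hne : ((R.filter (fun y => y < x)).attach).Nonempty := by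
    by_contra hne
    rw [Finset.not_nonempty_iff_eq_empty] at hne
    rw [hne] at hsup
    simp at hsup; omega
  obtain ⟨i, hi, hieq⟩ := Finset.exists_mem_eq_sup _ hne (fun y => ht R y.1)
  refine ⟨i.1, (Finset.mem_filter.mp i.2).1, (Finset.mem_filter.mp i.2).2, ?_⟩
  omega

/-- descending with a guaranteed global-height drop -/
theorem ht_drop {R : Finset P} : ∀ t : ℕ, 1 ≤ t → ∀ x : P, t + 1 ≤ ht R x →
    ∃ w, w ∈ R ∧ w < x ∧ ht (univ : Finset P) w + t ≤ ht (univ : Finset P) x := by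
  intro t
  induction t with
  | zero => omega
  | succ n IH =>
    intro _ x hx
    by_cases hn : n = 0
    · subst hn
      obtain ⟨y, hyR, hyx, _⟩ := ht_exists (le_refl 1) hx
      exact ⟨y, hyR, hyx, ht_lt univ (mem_univ y) hyx⟩
    · have h1n : 1 ≤ n := by omega
      obtain ⟨y, hyR, hyx, hy⟩ := ht_exists (by omega : 1 ≤ n + 1) hx
      obtain ⟨w, hwR, hwy, hdrop⟩ := IH h1n y hy
      refine ⟨w, hwR, hwy.trans hyx, ?_⟩
      have := ht_lt (univ : Finset P) (mem_univ y) hyx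
      omega

/-- from large global height we get a strict chain ending at `x`. -/
theorem chain_of_ht : ∀ n : ℕ, ∀ x : P, n ≤ ht (univ : Finset P) x →
    ∃ X : ℕ → P, (∀ i j, i < j → j < n → X i < X j) ∧ (0 < n → X (n - 1) = x) := by
  intro n
  induction n with
  | zero => exact fun x _ => ⟨fun _ => x, fun i j h1 h2 => by omega, by omega⟩
  | succ n IH =>
    intro x hx
    by_cases hn : n = 0
    · subst hn
      refine ⟨fun _ => x, fun i j h1 h2 => by omega, fun _ => rfl⟩
    · have h1n : 1 ≤ n := by omega
      obtain ⟨y, _, hyx, hy⟩ := ht_exists h1n hx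
      obtain ⟨X', hc, htop⟩ := IH y hy
      have hXle : ∀ i, i < n → X' i ≤ y := by
        intro i hi
        rcases Nat.lt_or_ge i (n - 1) with h | h
        · exact le_of_lt (((hc i (n-1) h (by omega)).trans_le (le_of_eq (htop h1n))))
        · have : i = n - 1 := by omega
          rw [this, htop h1n]
      refine ⟨fun i => if i < n then X' i else x, ?_, ?_⟩
      · intro i j hij hjn1
        by_cases hj : j < n
        · simp only [if_pos hj, if_pos (hij.trans hj)]
          exact hc i j hij hj
        · have hjn : j = n := by omega
          have hi : i < n := by omega
          simp only [if_pos hi, hjn, if_neg (lt_irrefl n)]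
          exact lt_of_le_of_lt (hXle i hi) hyx
      · intro _
        simp only [Nat.add_sub_cancel, if_neg (lt_irrefl n)]

theorem hasLadder_of_ht {n : ℕ} {x : P} (h : n ≤ ht (univ : Finset P) x) :
    HasLadder P n 1 := by
  obtain ⟨X, hc, _⟩ := chain_of_ht n x h
  refine ⟨X, fun i => {X i}, hc, by simp, ?_, ?_, ?_⟩
  · intro i _
    simp only [coe_singleton]
    exact Set.pairwise_singleton _ _
  · intro i _ y hy
    simp only [mem_singleton] at hy
    exact le_of_eq hy
  · intro i hi y hy
    simp only [mem_singleton] at hy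
    subst hy
    exact (hc i (i+1) (by omega) hi : X i < X (i+1)).not_ge

/-- antichain from a set with bounded internal heights -/
theorem exists_antichain_of_ht {Q : Finset P} {τ κ : ℕ} (hκ : 1 ≤ κ)
    (hQht : ∀ y ∈ Q, ht Q y ≤ τ) (hlow : τ * (κ - 1) < Q.card) :
    ∃ A, A ⊆ Q ∧ A.card = κ ∧ IsAntichain (· ≤ ·) (↑A : Set P) := by
  have hcover : Q ⊆ (Finset.Icc 1 τ).biUnion (fun i => Q.filter (fun y => ht Q y = i)) := by
    intro y hy
    refine Finset.mem_biUnion.mpr ⟨ht Q y, ?_, Finset.mem_filter.mpr ⟨hy, rfl⟩⟩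
    exact Finset.mem_Icc.mpr ⟨ht_pos Q y, hQht y hy⟩
  have hfib : ∃ i ∈ Finset.Icc 1 τ, κ ≤ (Q.filter (fun y => ht Q y = i)).card := by
    by_contra hcon
    push_neg at hcon
    have h1 : Q.card ≤ ((Finset.Icc 1 τ).biUnion (fun i => Q.filter (fun y => ht Q y = i))).card :=
      Finset.card_le_card hcover
    have h2 : ((Finset.Icc 1 τ).biUnion (fun i => Q.filter (fun y => ht Q y = i))).card
        ≤ ∑ i ∈ Finset.Icc 1 τ, (Q.filter (fun y => ht Q y = i)).card :=
      Finset.card_biUnion_le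
    have h3 : ∑ i ∈ Finset.Icc 1 τ, (Q.filter (fun y => ht Q y = i)).card
        ≤ (Finset.Icc 1 τ).card • (κ - 1) := by
      apply Finset.sum_le_card_nsmul
      intro i hi
      have := hcon i hi
      omega
    have h4 : (Finset.Icc 1 τ).card = τ := by
      rw [Nat.card_Icc]; omega
    rw [h4, smul_eq_mul] at h3
    omega
  obtain ⟨i, _, hfi⟩ := hfib
  obtain ⟨A, hAsub, hAcard⟩ := Finset.exists_subset_card_eq hfi
  refine ⟨A, hAsub.trans (Finset.filter_subset _ _), hAcard, ?_⟩
  intro x hx y hy hxy hle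
  have hx' := Finset.mem_filter.mp (hAsub hx)
  have hy' := Finset.mem_filter.mp (hAsub hy)
  have hlt : (x : P) < y := lt_of_le_of_ne hle hxy
  have := ht_lt Q hx'.1 hlt
  omega

/-- greedy maximal `a`-degenerate subset -/
theorem greedy (a : ℕ) (B : Finset P) :
    ∃ S : Finset P, S ⊆ B ∧ ADegenerate a S ∧
      ∀ z ∈ B, z ∉ S → a ≤ (S.filter (fun y => y < z)).card := by
  induction B using Finset.strongInduction with
  | _ B IH =>
    rcases B.eq_empty_or_nonempty with rfl | hne
    · exact ⟨∅, Finset.Subset.refl _, fun x hx => absurd hx (Finset.notMem_empty x),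
        fun z hz => absurd hz (Finset.notMem_empty z)⟩
    · obtain ⟨x, hxB, hxmax⟩ : ∃ x ∈ B, ∀ z ∈ B, ¬ x < z := by
        obtain ⟨x, hx⟩ := Finset.exists_maximal hne
        exact ⟨x, hx.prop, fun z hz hlt => hlt.not_ge (hx.2 hz hlt.le)⟩
      have hssub : B.erase x ⊂ B := Finset.erase_ssubset hxB
      obtain ⟨S', hS'sub, hS'deg, hS'rej⟩ := IH _ hssub
      by_cases hc : (S'.filter (fun y => y < x)).card < a
      · refine ⟨insert x S', ?_, ?_, ?_⟩
        · exact Finset.insert_subset hxB (hS'sub.trans (Finset.erase_subset x B))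
        · rintro z hz ⟨T, hTsub, hTcard, hTlt⟩
          have hxT : x ∉ T := by
            intro hxT
            have hxz := hTlt x hxT
            rcases Finset.mem_insert.mp hz with rfl | hzS'
            · exact lt_irrefl _ hxz
            · exact hxmax z (Finset.erase_subset x B (hS'sub hzS')) hxz
          have hTS' : T ⊆ S' := by
            intro y hy
            rcases Finset.mem_insert.mp (hTsub hy) with rfl | h
            · exact absurd hy hxT
            · exact h
          rcases Finset.mem_insert.mp hz with rfl | hzS'
          · have hsub2 : T ⊆ S'.filter (fun y => y < z) := by
              intro y hy
              exact Finset.mem_filter.mpr ⟨hTS' hy, hTlt y hy⟩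
            have := Finset.card_le_card hsub2
            omega
          · exact hS'deg z hzS' ⟨T, hTS', hTcard, hTlt⟩
        · intro z hzB hzS
          have hzx : z ≠ x := fun h => hzS (h ▸ Finset.mem_insert_self x S')
          have hz' : z ∈ B.erase x := Finset.mem_erase.mpr ⟨hzx, hzB⟩
          have hzS' : z ∉ S' := fun h => hzS (Finset.mem_insert_of_mem h)
          refine le_trans (hS'rej z hz' hzS') (Finset.card_le_card ?_)
          exact Finset.filter_subset_filter _ (Finset.subset_insert x S')
      · refine ⟨S', hS'sub.trans (Finset.erase_subset x B), hS'deg, ?_⟩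
        intro z hzB hzS
        by_cases hzx : z = x
        · subst hzx; omega
        · exact hS'rej z (Finset.mem_erase.mpr ⟨hzx, hzB⟩) hzS


/-- invariant: elements of the `K`-th residual set carry a partial ladder below them. -/
def Inv (κ τ K : ℕ) (u : P) : Prop :=
  ∃ t, ∃ X : ℕ → P, ∃ Y : ℕ → Finset P,
    (∀ i j, i < j → j < t → X i < X j) ∧
    (∀ i, i < t → (Y i).card = κ) ∧
    (∀ i, i < t → IsAntichain (· ≤ ·) (↑(Y i) : Set P)) ∧
    (∀ i, i < t → ∀ y ∈ Y i, y ≤ X i) ∧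
    (∀ i, i + 1 < t → ∀ y ∈ Y (i + 1), ¬ y ≤ X i) ∧
    (0 < t → X (t - 1) ≤ u) ∧
    K * τ ≤ t * τ + ht (univ : Finset P) u

theorem rounds {a s τ κ : ℕ} (ha : 2 ≤ a) (hτ : 1 ≤ τ) (hκ : 1 ≤ κ)
    (hκτ : τ * κ ≤ a - 1)
    (hdeg : ∀ S : Finset P, ADegenerate a S → S.card ≤ s - 1) :
    ∀ K : ℕ, ∃ R : Finset P, Fintype.card P ≤ K * (s - 1) + R.card ∧
      ∀ u ∈ R, Inv (P := P) κ τ K u := by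
  intro K
  induction K with
  | zero =>
    refine ⟨univ, by simp [Finset.card_univ], fun u _ => ?_⟩
    refine ⟨0, fun _ => u, fun _ => ∅, ?_, ?_, ?_, ?_, ?_, ?_, ?_⟩
    · intro i j h1 h2; omega
    · intro i h; omega
    · intro i h; omega
    · intro i h; omega
    · intro i h; omega
    · intro h; omega
    · simp
  | succ K IH =>
    obtain ⟨R, hcard, hinv⟩ := IH
    obtain ⟨S, hSsub, hSdeg, hSrej⟩ := greedy a (R.filter (fun x => ht R x ≤ τ))
    have hSband : ∀ y ∈ S, y ∈ R ∧ ht R y ≤ τ := by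
      intro y hy
      exact Finset.mem_filter.mp (hSsub hy)
    refine ⟨R \ S, ?_, ?_⟩
    · have h1 : R.card ≤ (R \ S).card + S.card := Finset.card_le_card_sdiff_add_card
      have h2 : S.card ≤ s - 1 := hdeg S hSdeg
      have h3 : (K + 1) * (s - 1) = K * (s - 1) + (s - 1) := by ring
      omega
    · intro u hu
      have huR : u ∈ R := (Finset.mem_sdiff.mp hu).1
      have huS : u ∉ S := (Finset.mem_sdiff.mp hu).2
      by_cases hb : ht R u ≤ τ
      · -- A-step : u was rejected by the greedy set, it has a wide pool below it
        have hub : u ∈ R.filter (fun x => ht R x ≤ τ) := Finset.mem_filter.mpr ⟨huR, hb⟩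
        have hpool : a ≤ (S.filter (fun y => y < u)).card := hSrej u hub huS
        have hFne : (S.filter (fun y => y < u)).Nonempty := by
          rw [← Finset.card_pos]; omega
        obtain ⟨v, hvF, hvmin⟩ : ∃ v ∈ S.filter (fun y => y < u), ∀ y ∈ S.filter (fun y => y < u), ¬ y < v := by
          obtain ⟨v, hv⟩ := Finset.exists_minimal hFne
          exact ⟨v, hv.prop, fun z hz hlt => hlt.not_ge (hv.2 hz hlt.le)⟩
        have hvu : v < u := (Finset.mem_filter.mp hvF).2
        have hvS : v ∈ S := (Finset.mem_filter.mp hvF).1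
        have hvR : v ∈ R := (hSband v hvS).1
        set Q := (S.filter (fun y => y < u)).erase v with hQdef
        have hQcard : a - 1 ≤ Q.card := by
          rw [hQdef, Finset.card_erase_of_mem hvF]; omega
        have hQF : Q ⊆ S.filter (fun y => y < u) := Finset.erase_subset _ _
        have hQv : ∀ y ∈ Q, ¬ y ≤ v := by
          intro y hy hyv
          rcases eq_or_lt_of_le hyv with rfl | hlt
          · exact (Finset.mem_erase.mp hy).1 rfl
          · exact hvmin y (hQF hy) hlt
        have hQS : Q ⊆ S := fun y hy => (Finset.mem_filter.mp (hQF hy)).1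
        have hQR : Q ⊆ R := fun y hy => (hSband y (hQS hy)).1
        have hQht : ∀ y ∈ Q, ht Q y ≤ τ := by
          intro y hy
          exact le_trans (ht_mono hQR y) (hSband y (hQS hy)).2
        have hlow : τ * (κ - 1) < Q.card := by
          obtain ⟨κ', rfl⟩ : ∃ κ', κ = κ' + 1 := ⟨κ - 1, by omega⟩
          have h1 : τ * (κ' + 1) = τ * κ' + τ := by ring
          have h2 : κ' + 1 - 1 = κ' := by omega
          rw [h2]
          omega
        obtain ⟨A, hAQ, hAcard, hAanti⟩ := exists_antichain_of_ht hκ hQht hlow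
        obtain ⟨t, X, Y, c1, c2, c3, c4, c5, ctop, ccount⟩ := hinv v hvR
        have hXlev : ∀ i, i < t → X i ≤ v := by
          intro i hi
          rcases Nat.lt_or_ge i (t - 1) with h | h
          · exact le_of_lt ((c1 i (t-1) h (by omega)).trans_le (ctop (by omega)))
          · have hieq : i = t - 1 := by omega
            rw [hieq]; exact ctop (by omega)
        refine ⟨t + 1, fun i => if i < t then X i else u,
          fun i => if i < t then Y i else A, ?_, ?_, ?_, ?_, ?_, ?_, ?_⟩
        · intro i j hij hjt
          by_cases hj : j < t
          · simp only [if_pos hj, if_pos (hij.trans hj)]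
            exact c1 i j hij hj
          · have hjt' : j = t := by omega
            have hi : i < t := by omega
            simp only [if_pos hi, hjt', if_neg (lt_irrefl t)]
            exact lt_of_le_of_lt (hXlev i hi) hvu
        · intro i hi
          by_cases h : i < t
          · simp only [if_pos h]; exact c2 i h
          · have : i = t := by omega
            simp only [this, if_neg (lt_irrefl t)]; exact hAcard
        · intro i hi
          by_cases h : i < t
          · simp only [if_pos h]; exact c3 i h
          · have : i = t := by omega
            simp only [this, if_neg (lt_irrefl t)]; exact hAanti
        · intro i hi y hy
          by_cases h : i < t
          · simp only [if_pos h] at hy ⊢; exact c4 i h y hy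
          · have : i = t := by omega
            simp only [this, if_neg (lt_irrefl t)] at hy ⊢
            exact le_of_lt (Finset.mem_filter.mp (hQF (hAQ hy))).2
        · intro i hi y hy
          by_cases h : i + 1 < t
          · simp only [if_pos h, if_pos (by omega : i < t)] at hy ⊢
            exact c5 i h y hy
          · have hit : i + 1 = t := by omega
            have hi' : i < t := by omega
            simp only [hit, if_neg (lt_irrefl t), if_pos hi'] at hy ⊢
            intro hle
            exact hQv y (hAQ hy) (le_trans hle (hXlev i (by omega)))
        · intro _
          simp only [Nat.add_sub_cancel, if_neg (lt_irrefl t)]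
          exact le_rfl
        · have hmono : ht (univ : Finset P) v ≤ ht (univ : Finset P) u :=
            le_of_lt (ht_lt univ (Finset.mem_univ v) hvu)
          have e1 : (K + 1) * τ = K * τ + τ := by ring
          have e2 : (t + 1) * τ = t * τ + τ := by ring
          rw [e1, e2]
          omega
      · -- B-step : u is high in R, descend with a height drop of τ
        have hbig : τ + 1 ≤ ht R u := by omega
        obtain ⟨w, hwR, hwu, hwdrop⟩ := ht_drop τ hτ u hbig
        obtain ⟨t, X, Y, c1, c2, c3, c4, c5, ctop, ccount⟩ := hinv w hwR
        refine ⟨t, X, Y, c1, c2, c3, c4, c5,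
          fun h0 => (ctop h0).trans (le_of_lt hwu), ?_⟩
        have e1 : (K + 1) * τ = K * τ + τ := by ring
        rw [e1]
        omega

end DegLadderAux


set_option maxHeartbeats 1600000 in
theorem poset_degenerate_or_ladder {P : Type*} [PartialOrder P] [Fintype P]
    (m a : ℕ) (ha : 2 ≤ a) (ham : a ≤ m) (hP : Fintype.card P = m) :
    (∃ S : Finset P, ADegenerate a S ∧
      max (a : ℝ) ((a : ℝ) ^ ((1 : ℝ) / 4) * Real.sqrt m / 3) ≤ (S.card : ℝ)) ∨
    (∃ l α : ℕ, HasLadder P l α ∧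
      max (a : ℝ) ((a : ℝ) ^ ((1 : ℝ) / 4) * Real.sqrt m / 3) ≤ ((l * max α 1 : ℕ) : ℝ)) := by
  classical
  open DegLadderAux in
  by_cases hcase : (a : ℝ) ^ ((1 : ℝ) / 4) * Real.sqrt m / 3 ≤ (a : ℝ)
  · -- easy case : any `a`-element subset is `a`-degenerate
    left
    have hcard : a ≤ (univ : Finset P).card := by rw [Finset.card_univ, hP]; exact ham
    obtain ⟨S, _, hScard⟩ := Finset.exists_subset_card_eq hcard
    refine ⟨S, ?_, ?_⟩
    · rintro x hx ⟨T, hTsub, hTcard, hTlt⟩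
      have hxT : x ∉ T := fun h => lt_irrefl x (hTlt x h)
      have hsub : T ⊆ S.erase x := fun y hy =>
        Finset.mem_erase.mpr ⟨(hTlt y hy).ne, hTsub hy⟩
      have h1 := Finset.card_le_card hsub
      rw [Finset.card_erase_of_mem hx, hScard] at h1
      omega
    · rw [hScard]
      exact max_le le_rfl hcase
  · push_neg at hcase
    by_contra hcon
    push_neg at hcon
    obtain ⟨hD, hL⟩ := hcon
    set σ : ℝ := (a : ℝ) ^ ((1 : ℝ) / 4) * Real.sqrt m / 3 with hσdef
    have hmax : max (a : ℝ) σ = σ := max_eq_right (le_of_lt hcase)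
    rw [hmax] at hD hL
    have hσa : (a : ℝ) < σ := hcase
    have hσ0 : (0 : ℝ) < σ := lt_of_le_of_lt (by positivity) hσa
    set s : ℕ := ⌈σ⌉₊ with hsdef
    have hσs : σ ≤ (s : ℝ) := Nat.le_ceil σ
    have has : a < s := Nat.lt_ceil.mpr hσa
    have hs3 : 3 ≤ s := by omega
    set τ : ℕ := Nat.sqrt a with hτdef
    have hττ : τ * τ ≤ a := by
      rw [hτdef]
      have := Nat.sqrt_le' a
      simpa [pow_two] using this
    have haττ : a < (τ + 1) * (τ + 1) := by
      rw [hτdef]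
      have := Nat.lt_succ_sqrt' a
      simpa [pow_two, Nat.succ_eq_add_one] using this
    clear_value s
    have hτ1 : 1 ≤ τ := by
      by_contra h
      push_neg at h
      have hτ0' : τ = 0 := by omega
      rw [hτ0'] at haττ
      omega
    have hτa1 : τ ≤ a - 1 := by
      by_contra hcon2
      push_neg at hcon2
      have h1 : a ≤ τ := by omega
      have h2 : a * a ≤ τ * τ := Nat.mul_le_mul h1 h1
      have h3 : a * a ≤ a * 1 := by
        have := le_trans h2 hττ
        simpa using this
      have := Nat.le_of_mul_le_mul_left h3 (by omega : 0 < a)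
      omega
    clear_value τ
    set κ : ℕ := (a - 1) / τ with hκdef
    have hκ1 : 1 ≤ κ := by
      rw [hκdef]
      exact (Nat.one_le_div_iff (by omega)).mpr hτa1
    have hκτ : τ * κ ≤ a - 1 := by
      rw [hκdef, mul_comm]
      exact Nat.div_mul_le_self _ _
    clear_value κ
    have hdeg' : ∀ S : Finset P, ADegenerate a S → S.card ≤ s - 1 := by
      intro S hS
      have h1 := hD S hS
      have h2 : (S.card : ℝ) < (s : ℝ) := lt_of_lt_of_le h1 hσs
      have h3 : S.card < s := by exact_mod_cast h2
      omega
    have hht : ∀ x : P, ht (univ : Finset P) x ≤ s - 1 := by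
      intro x
      by_contra hcon2
      push_neg at hcon2
      have h1 : s ≤ ht (univ : Finset P) x := by omega
      have h2 := hL s 1 (hasLadder_of_ht h1)
      simp only [max_self, mul_one] at h2
      exact absurd (lt_of_le_of_lt hσs h2) (lt_irrefl σ)
    set K : ℕ := (s - 1) / κ + (s - 1) / τ + 1 with hKdef
    clear_value K
    obtain ⟨R, hRcard, hRinv⟩ := rounds ha hτ1 hκ1 hκτ hdeg' K
    rcases R.eq_empty_or_nonempty with rfl | ⟨u, hu⟩
    · -- R empty : m ≤ K (s-1), contradiction with real arithmetic
      simp only [Finset.card_empty, add_zero] at hRcard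
      rw [hP] at hRcard
      have hm1 : (m : ℝ) ≤ (K : ℝ) * ((s : ℝ) - 1) := by
        calc (m : ℝ) ≤ ((K * (s - 1) : ℕ) : ℝ) := by exact_mod_cast hRcard
        _ = (K : ℝ) * ((s : ℝ) - 1) := by
            push_cast [Nat.cast_sub (by omega : 1 ≤ s)]
            ring
      set ra : ℝ := Real.sqrt a with hradef
      have hra0 : 0 < ra := Real.sqrt_pos.mpr (by positivity)
      have hra2 : ra ^ 2 = (a : ℝ) := Real.sq_sqrt (by positivity)
      clear_value ra
      have hra2' : (2 : ℝ) ≤ ra ^ 2 := by rw [hra2]; exact_mod_cast ha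
      have hra1 : 1 < ra := by nlinarith
      have hden : 0 < ra - 1 := by linarith
      have hτ0 : (0 : ℝ) < (τ : ℝ) := by exact_mod_cast hτ1
      have hκ0 : (0 : ℝ) < (κ : ℝ) := by exact_mod_cast hκ1
      have hτra : (τ : ℝ) ≤ ra := by
        by_contra hcc
        push_neg at hcc
        have h1 : ((τ : ℝ)) * τ ≤ (a : ℝ) := by exact_mod_cast hττ
        nlinarith [hra2]
      have hraτ1 : ra < (τ : ℝ) + 1 := by
        have h1 : (a : ℝ) < ((τ : ℝ) + 1) * ((τ : ℝ) + 1) := by exact_mod_cast haττ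
        nlinarith [hra2, hra0.le]
      have hnat : a ≤ κ * τ + τ := by
        have hd := Nat.div_add_mod (a - 1) τ
        have hm' := Nat.mod_lt (a - 1) (show 0 < τ by omega)
        rw [hκdef, mul_comm]
        generalize hgen : τ * ((a - 1) / τ) = Z at hd ⊢
        generalize hgen2 : (a - 1) % τ = r at hd hm'
        omega
      have hκra : ra - 1 ≤ (κ : ℝ) := by
        have h1 : (a : ℝ) ≤ (κ : ℝ) * τ + τ := by exact_mod_cast hnat
        nlinarith [hra2, mul_nonneg hra0.le (sub_nonneg.mpr hτra)]
      have hτra1 : ra - 1 ≤ (τ : ℝ) := by linarith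
      have hK : (K : ℝ) ≤ ((s : ℝ) - 1) / κ + ((s : ℝ) - 1) / τ + 1 := by
        have e1 : (((s - 1) / κ : ℕ) : ℝ) ≤ ((s : ℝ) - 1) / (κ : ℝ) := by
          calc (((s - 1) / κ : ℕ) : ℝ) ≤ (((s - 1) : ℕ) : ℝ) / (κ : ℝ) := Nat.cast_div_le
          _ = ((s : ℝ) - 1) / κ := by rw [Nat.cast_sub (by omega : 1 ≤ s)]; norm_num
        have e2 : (((s - 1) / τ : ℕ) : ℝ) ≤ ((s : ℝ) - 1) / (τ : ℝ) := by
          calc (((s - 1) / τ : ℕ) : ℝ) ≤ (((s - 1) : ℕ) : ℝ) / (τ : ℝ) := Nat.cast_div_le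
          _ = ((s : ℝ) - 1) / τ := by rw [Nat.cast_sub (by omega : 1 ≤ s)]; norm_num
        rw [hKdef]
        push_cast
        linarith
      set S1 : ℝ := (s : ℝ) - 1 with hS1def
      have hS10 : 0 ≤ S1 := by
        rw [hS1def]
        have : (1 : ℝ) ≤ (s : ℝ) := by exact_mod_cast (by omega : 1 ≤ s)
        linarith
      have hS1σ : S1 ≤ σ := by
        have h1 : ((⌈σ⌉₊ : ℕ) : ℝ) < σ + 1 := Nat.ceil_lt_add_one hσ0.le
        rw [hS1def, hsdef]
        linarith
      have hm2 : (m : ℝ) ≤ S1 * S1 / κ + S1 * S1 / τ + S1 := by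
        have h1 : (K : ℝ) * S1 ≤ (S1 / κ + S1 / τ + 1) * S1 :=
          mul_le_mul_of_nonneg_right hK hS10
        calc (m : ℝ) ≤ (K : ℝ) * S1 := hm1
        _ ≤ (S1 / κ + S1 / τ + 1) * S1 := h1
        _ = S1 * S1 / κ + S1 * S1 / τ + S1 := by ring
      have hsq : S1 * S1 ≤ σ * σ := mul_le_mul hS1σ hS1σ hS10 hσ0.le
      have hb1 : S1 * S1 / κ ≤ σ * σ / (ra - 1) :=
        div_le_div₀ (by positivity) hsq hden hκra
      have hb2 : S1 * S1 / τ ≤ σ * σ / (ra - 1) :=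
        div_le_div₀ (by positivity) hsq hden hτra1
      have hm3 : (m : ℝ) ≤ 2 * (σ * σ) / (ra - 1) + σ := by
        have : 2 * (σ * σ) / (ra - 1) = σ * σ / (ra - 1) + σ * σ / (ra - 1) := by ring
        linarith
      have hσ2 : σ * σ = ra * m / 9 := by
        rw [hσdef, hradef]
        have h14 : ((a : ℝ) ^ ((1 : ℝ) / 4)) * ((a : ℝ) ^ ((1 : ℝ) / 4))
            = (a : ℝ) ^ ((1 : ℝ) / 2) := by
          rw [← Real.rpow_add (by positivity)]
          norm_num
        have hsqm : Real.sqrt (m : ℝ) * Real.sqrt m = m :=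
          Real.mul_self_sqrt (by positivity)
        have hhalf : (a : ℝ) ^ ((1 : ℝ) / 2) = Real.sqrt a := by
          rw [Real.sqrt_eq_rpow]
        calc (a : ℝ) ^ ((1 : ℝ) / 4) * Real.sqrt m / 3 * ((a : ℝ) ^ ((1 : ℝ) / 4) * Real.sqrt m / 3)
            = ((a : ℝ) ^ ((1 : ℝ) / 4) * (a : ℝ) ^ ((1 : ℝ) / 4)) * (Real.sqrt m * Real.sqrt m) / 9 := by
              ring
        _ = Real.sqrt a * m / 9 := by rw [h14, hsqm, hhalf]
      have hmm : (m : ℝ) = 9 * (σ * σ) / ra := by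
        rw [hσ2]
        field_simp
      have h7ra : 0 < 7 * ra - 9 := by nlinarith [hra2']
      have hσra2 : ra ^ 2 < σ := by rw [hra2]; exact hσa
      have hpoly : 0 ≤ 7 * ra ^ 2 - 10 * ra + 1 := by nlinarith [sq_nonneg (ra - 1), hra2']
      have hkey : ra * (ra - 1) < σ * (7 * ra - 9) := by
        nlinarith [mul_lt_mul_of_pos_right hσra2 h7ra, mul_nonneg hra0.le hpoly]
      have hfinal : 2 * (σ * σ) / (ra - 1) + σ < 9 * (σ * σ) / ra := by
        rw [div_add' _ _ _ (ne_of_gt hden), div_lt_div_iff₀ hden hra0]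
        nlinarith [mul_lt_mul_of_pos_left hkey hσ0]
      linarith [hm3, hfinal, hmm.le, hmm.ge]
    · -- R nonempty : the invariant yields a too-large ladder
      obtain ⟨t, X, Y, c1, c2, c3, c4, c5, ctop, ccount⟩ := hRinv u hu
      have hlad : HasLadder P t κ := ⟨X, Y, c1, c2, c3, c4, c5⟩
      have h2 := hL t κ hlad
      have hmaxκ : max κ 1 = κ := max_eq_left hκ1
      rw [hmaxκ] at h2
      have h3 : ((t * κ : ℕ) : ℝ) < (s : ℝ) := lt_of_lt_of_le h2 hσs
      have h4 : t * κ < s := by exact_mod_cast h3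
      have h5 : t * κ ≤ s - 1 := by omega
      have h6 : t ≤ (s - 1) / κ := (Nat.le_div_iff_mul_le (by omega)).mpr h5
      have h7 : t * τ ≤ ((s - 1) / κ) * τ := Nat.mul_le_mul_right τ h6
      have h8 : ht (univ : Finset P) u ≤ s - 1 := hht u
      have h9 : K * τ = ((s - 1) / κ) * τ + ((s - 1) / τ) * τ + τ := by rw [hKdef]; ring
      have h10 : s - 1 < ((s - 1) / τ) * τ + τ := by
        have hd := Nat.div_add_mod (s - 1) τ
        have hm' := Nat.mod_lt (s - 1) (show 0 < τ by omega)
        rw [mul_comm]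
        generalize hgen : τ * ((s - 1) / τ) = Z at hd ⊢
        generalize hgen2 : (s - 1) % τ = r at hd hm'
        omega
      have h11 : K * τ ≤ t * τ + ht (univ : Finset P) u := ccount
      linarith [h7, h8, h9, h10, h11]
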